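/- Let p be prime, s a positive integer, k the multiplicative order of p modulo s, l a positive integer, and q = p^{kls}. Let r be a positive integer coprime to q - 1 and P(x) ∈ F_{p^{kl}}[x]. Then x^r P(x^{(q-1)/s}) is a permutation polynomial of F_q if and only if P(ω) ≠ 0 for every ω ∈ F_q with ω^s = 1. -/

import Mathlib

theorem wan_lidl_chapuy (p s k l : ℕ) [Fact p.Prime] (hs : 0 < s) (hl : 0 < l)
    (hk : 0 < k) (hord : ∀ j : ℕ, 0 < j → (p ^ j ≡ 1 [MOD s] ↔ k ∣ j))
    {F : Type*} [Field F] [Fintype F] [CharP F p]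
    (hcard : Fintype.card F = p ^ (k * l * s))
    (r : ℕ) (hr : 0 < r) (hrq : Nat.gcd r (p ^ (k * l * s) - 1) = 1)
    (P : Polynomial F) (hP : ∀ c ∈ P.coeffs, c ^ p ^ (k * l) = c) :
    Function.Bijective
        (fun x : F => x ^ r * P.eval (x ^ ((p ^ (k * l * s) - 1) / s))) ↔
      ∀ ω : F, ω ^ s = 1 → P.eval ω ≠ 0 := by
  classical
  have hp : p.Prime := Fact.out
  set t := p ^ (k * l) with ht_def
  set q1 := p ^ (k * l * s) - 1 with hq1_def
  set d := q1 / s with hd_def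
  have ht2 : 2 ≤ t := le_trans hp.two_le (Nat.le_self_pow (by positivity) p)
  have hq : p ^ (k * l * s) = t ^ s := by rw [ht_def, pow_mul]
  have hq2 : 2 ≤ p ^ (k * l * s) :=
    le_trans hp.two_le (Nat.le_self_pow (by positivity) p)
  have hq1pos : 0 < q1 := by omega
  have hsq1 : s ∣ q1 := by
    have h := (hord (k * l * s) (by positivity)).mpr ⟨l * s, by ring⟩
    exact (Nat.modEq_iff_dvd' (by omega)).mp h.symm
  have hst : s ∣ t - 1 := by
    have h := (hord (k * l) (by positivity)).mpr ⟨l, rfl⟩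
    exact (Nat.modEq_iff_dvd' (by omega)).mp h.symm
  have hds : d * s = q1 := Nat.div_mul_cancel hsq1
  -- `(t-1) ∣ d`
  have htd : (t - 1) ∣ d := by
    rw [hd_def, Nat.dvd_div_iff_mul_dvd hsq1]
    -- `s * (t - 1) ∣ t ^ s - 1`
    have hsum : s ∣ ∑ i ∈ Finset.range s, t ^ i := by
      rw [← ZMod.natCast_eq_zero_iff]
      push_cast
      have h1 : (t : ZMod s) = 1 := by
        have := (ZMod.natCast_eq_natCast_iff t 1 s).mpr
          ((hord (k * l) (by positivity)).mpr ⟨l, rfl⟩)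
        simpa using this
      simp [h1]
    obtain ⟨m, hm⟩ := hsum
    have hZ : ((s : ℤ) * (t - 1)) ∣ ((t : ℤ) ^ s - 1) := by
      refine ⟨m, ?_⟩
      have := geom_sum_mul (t : ℤ) s
      rw [← this]
      have hm' : ((∑ i ∈ Finset.range s, t ^ i : ℕ) : ℤ) = (s : ℤ) * m := by
        exact_mod_cast hm
      push_cast at hm'
      rw [hm']; ring
    have hcast : ((q1 : ℕ) : ℤ) = (t : ℤ) ^ s - 1 := by
      rw [hq1_def, hq]
      push_cast [Nat.one_le_iff_ne_zero.mpr (by positivity : (t : ℕ) ^ s ≠ 0)]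
      ring
    have : ((s * (t - 1) : ℕ) : ℤ) ∣ ((q1 : ℕ) : ℤ) := by
      rw [hcast]
      have : ((s * (t - 1) : ℕ) : ℤ) = (s : ℤ) * ((t : ℤ) - 1) := by
        push_cast [Nat.cast_sub (by omega : 1 ≤ t)]
        ring
      rw [this]; exact hZ
    exact_mod_cast this
  -- basic root-of-unity facts
  have hpow_card : ∀ x : F, x ≠ 0 → x ^ q1 = 1 := by
    intro x hx
    have := FiniteField.pow_card_sub_one_eq_one x hx
    rwa [hcard] at this
  have hrou : ∀ x : F, x ≠ 0 → (x ^ d) ^ s = 1 := by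
    intro x hx
    rw [← pow_mul, hds]
    exact hpow_card x hx
  -- Frobenius: evaluation commutes with `t`-th power
  have frob : ∀ x : F, (P.eval x) ^ t = P.eval (x ^ t) := by
    intro x
    have hPmap : P.map (iterateFrobenius F p (k * l)) = P := by
      ext n
      rw [Polynomial.coeff_map, iterateFrobenius_def]
      by_cases h : P.coeff n = 0
      · rw [h, zero_pow (by positivity)]
      · exact hP _ (P.coeff_mem_coeffs h)
    have h1 : iterateFrobenius F p (k * l) (P.eval x)
        = (P.map (iterateFrobenius F p (k * l))).eval (iterateFrobenius F p (k * l) x) := by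
      rw [← Polynomial.eval₂_eq_eval_map]
      have := Polynomial.hom_eval₂ P (RingHom.id F) (iterateFrobenius F p (k * l)) x
      rw [RingHom.comp_id] at this
      exact this
    rw [hPmap] at h1
    simpa [iterateFrobenius_def] using h1
  -- `ω ^ t = ω` for `s`-th roots of unity
  have homega_t : ∀ ω : F, ω ^ s = 1 → ω ^ t = ω := by
    intro ω hω
    obtain ⟨m, hm⟩ := hst
    have : ω ^ t = ω ^ (t - 1) * ω := by
      rw [← pow_succ]
      congr 1
      omega
    rw [this, hm, pow_mul, hω, one_pow, one_mul]
  -- key: `P(ω) ^ d = 1` when `P(ω) ≠ 0`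
  have hPd1 : ∀ ω : F, ω ^ s = 1 → P.eval ω ≠ 0 → (P.eval ω) ^ d = 1 := by
    intro ω hω hne
    have h1 : (P.eval ω) ^ t = P.eval ω := by rw [frob ω, homega_t ω hω]
    have h2 : (P.eval ω) ^ (t - 1) = 1 := by
      have h3 : (P.eval ω) ^ (t - 1) * P.eval ω = 1 * P.eval ω := by
        rw [one_mul, ← pow_succ]
        convert h1 using 2
        omega
      exact mul_right_cancel₀ hne h3
    obtain ⟨m, hm⟩ := htd
    rw [hm, pow_mul, h2, one_pow]
  -- injectivity of `x ↦ x ^ r`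
  have hrinj : Function.Injective (fun x : F => x ^ r) := by
    have hcop : (Nat.card Fˣ).Coprime r := by
      rw [Nat.card_eq_fintype_card, Fintype.card_units, hcard]
      exact (Nat.coprime_comm.mp hrq)
    have hu : Function.Injective (fun u : Fˣ => u ^ r) := (powCoprime hcop).injective
    intro x y hxy
    simp only at hxy
    by_cases hx : x = 0
    · subst hx
      rw [zero_pow hr.ne'] at hxy
      exact (pow_eq_zero_iff hr.ne').mp hxy.symm |>.symm
    · by_cases hy : y = 0
      · subst hy
        rw [zero_pow hr.ne'] at hxy
        exact absurd ((pow_eq_zero_iff hr.ne').mp hxy) hx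
      · have : Units.mk0 x hx ^ r = Units.mk0 y hy ^ r := by
          ext
          simpa using hxy
        have := hu this
        have := congrArg Units.val this
        simpa using this
  constructor
  · -- forward: bijective → no root of unity is a root of P
    intro hbij ω hω hPω
    have hω0 : ω ≠ 0 := by
      intro h
      rw [h, zero_pow hs.ne'] at hω
      exact zero_ne_one hω
    -- find x ≠ 0 with x ^ d = ω
    obtain ⟨g, hg⟩ := IsCyclic.exists_generator (α := Fˣ)
    obtain ⟨j, hj⟩ := mem_powers_iff_mem_zpowers.mpr (hg (Units.mk0 ω hω0))
    have hj' : g ^ j = Units.mk0 ω hω0 := hj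
    have hordg : orderOf g = q1 := by
      rw [orderOf_eq_card_of_forall_mem_zpowers hg, Nat.card_eq_fintype_card,
        Fintype.card_units, hcard]
    have hjs : q1 ∣ j * s := by
      rw [← hordg]
      apply orderOf_dvd_of_pow_eq_one
      rw [pow_mul, hj']
      ext
      simpa using hω
    have hdj : d ∣ j := by
      have : d * s ∣ j * s := hds ▸ hjs
      exact (Nat.mul_dvd_mul_iff_right hs).mp this
    obtain ⟨c, hc⟩ := hdj
    set x : F := ((g ^ c : Fˣ) : F) with hxdef
    have hx : x ≠ 0 := Units.ne_zero _
    have hxd : x ^ d = ω := by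
      have h2 : (g ^ c) ^ d = Units.mk0 ω hω0 := by
        rw [← pow_mul, mul_comm c d, ← hc]; exact hj'
      have h3 := congrArg Units.val h2
      simpa [hxdef] using h3
    have h0 : (fun x : F => x ^ r * P.eval (x ^ d)) x
        = (fun x : F => x ^ r * P.eval (x ^ d)) 0 := by
      simp only [hxd, hPω, mul_zero, zero_pow hr.ne', zero_mul]
    exact hx (hbij.injective h0)
  · -- backward: nonvanishing → bijective
    intro H
    rw [Fintype.bijective_iff_injective_and_card]
    refine ⟨?_, rfl⟩
    intro x y hxy
    simp only at hxy
    by_cases hx : x = 0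
    · subst hx
      rw [zero_pow hr.ne', zero_mul] at hxy
      by_contra hy
      have hy0 : y ≠ 0 := fun h => hy h.symm
      have h1 : P.eval (y ^ d) ≠ 0 := H _ (hrou y hy0)
      have h2 : y ^ r ≠ 0 := pow_ne_zero _ hy0
      exact mul_ne_zero h2 h1 hxy.symm
    · by_cases hy : y = 0
      · subst hy
        rw [zero_pow hr.ne', zero_mul] at hxy
        have h1 : P.eval (x ^ d) ≠ 0 := H _ (hrou x hx)
        have h2 : x ^ r ≠ 0 := pow_ne_zero _ hx
        exact absurd hxy (mul_ne_zero h2 h1)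
      · -- both nonzero
        have hPx : P.eval (x ^ d) ≠ 0 := H _ (hrou x hx)
        have hPy : P.eval (y ^ d) ≠ 0 := H _ (hrou y hy)
        have hPxd : (P.eval (x ^ d)) ^ d = 1 := hPd1 _ (hrou x hx) hPx
        have hPyd : (P.eval (y ^ d)) ^ d = 1 := hPd1 _ (hrou y hy) hPy
        have hxy2 : (x ^ d) ^ r = (y ^ d) ^ r := by
          have := congrArg (· ^ d) hxy
          simp only [mul_pow, hPxd, hPyd, mul_one] at this
          rw [← pow_mul, ← pow_mul, mul_comm r d, pow_mul, pow_mul] at this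
          exact this
        have hxd_eq : x ^ d = y ^ d := hrinj hxy2
        rw [hxd_eq] at hxy
        have : x ^ r = y ^ r := mul_right_cancel₀ hPy hxy
        exact hrinj this
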